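/- For every s > 1: | K̃_{1,2}(s) | ≤ s^{−3/2} · ( 2 + (2/3) · (1 − s^{−2})^{−1} + log((s+1)/(s−1)) ). -/
import Mathlib


open Real Set

lemma taylor_bound {x : ℝ} (hx0 : 0 < x) (hx1 : x < 1) :
    |Real.log ((1+x)/(1-x)) - 2*x| ≤ (2/3) * x^3 / (1 - x^2) := by
  have h1 : (0:ℝ) < 1 + x := by linarith
  have h2 : (0:ℝ) < 1 - x := by linarith
  have habs : |x| < 1 := by rw [abs_of_pos hx0]; exact hx1
  have hL : Real.log ((1+x)/(1-x)) = Real.log (1+x) - Real.log (1-x) :=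
    Real.log_div h1.ne' h2.ne'
  have hsum := hasSum_log_sub_log_of_abs_lt_one habs
  -- shift by 1
  have hshift : HasSum (fun k : ℕ => (2 : ℝ) * (1 / (2 * (k+1) + 1)) * x ^ (2 * (k+1) + 1))
      ((Real.log (1+x) - Real.log (1-x)) - 2*x) := by
    have := (hasSum_nat_add_iff' (f := fun k : ℕ => (2 : ℝ) * (1 / (2 * k + 1)) * x ^ (2 * k + 1)) 1).mpr hsum
    simpa using this
  have hx2 : x^2 < 1 := by nlinarith
  have hx2' : |x^2| < 1 := by rw [abs_of_pos (by positivity)]; exact hx2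
  have hgeom : HasSum (fun k : ℕ => (2/3) * x^3 * (x^2)^k) ((2/3) * x^3 / (1 - x^2)) := by
    have h :=  (hasSum_geometric_of_abs_lt_one hx2').mul_left ((2/3) * x^3)
    rw [div_eq_mul_inv ((2/3) * x^3 : ℝ)]; exact h
  have hle : (Real.log (1+x) - Real.log (1-x)) - 2*x ≤ (2/3) * x^3 / (1 - x^2) := by
    refine hasSum_le (fun k => ?_) hshift hgeom
    have h3 : x ^ (2*(k+1)+1) = x^3 * (x^2)^k := by ring
    rw [h3]
    have hc : (2 : ℝ) * (1 / (2 * ((k:ℝ)+1) + 1)) ≤ 2/3 := by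
      rw [mul_one_div]
      apply div_le_div_of_nonneg_left (by norm_num) (by norm_num)
      have : (0:ℝ) ≤ (k:ℝ) := Nat.cast_nonneg k
      linarith
    calc (2 : ℝ) * (1 / (2 * ((k:ℝ)+1) + 1)) * (x^3 * (x^2)^k)
        ≤ (2/3) * (x^3 * (x^2)^k) := by
          apply mul_le_mul_of_nonneg_right hc; positivity
      _ = (2/3) * x^3 * (x^2)^k := by ring
  have hge : 0 ≤ (Real.log (1+x) - Real.log (1-x)) - 2*x := by
    refine hasSum_le (fun k => ?_) hasSum_zero hshift
    positivity
  rw [hL, abs_of_nonneg hge]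
  exact hle

/-- The kernel `K̃_{1,2}(s)` (simplified form, valid for `s > 1`). -/
noncomputable def Ktilde12 (s : ℝ) : ℝ :=
  (s ^ ((3 : ℝ) / 2) + s ^ (-(3 : ℝ) / 2)) * Real.log ((s + 1) / (s - 1))
    - 2 * s ^ (-(1 : ℝ) / 2) * (s ^ 2 + s + 1) / (s + 1)

/-- Decay estimate (A.20) of Appendix A.7.3:
`|K̃_{1,2}(s)| ≤ s^{-3/2}(2 + (2/3)(1 - s^{-2})⁻¹ + log((s+1)/(s-1)))` for `s > 1`. -/
theorem Ktilde12_decay :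
    ∀ s : ℝ, 1 < s →
      |Ktilde12 s|
        ≤ s ^ (-(3 : ℝ) / 2)
          * (2 + (2 / 3) * (1 - (s ^ 2)⁻¹)⁻¹ + Real.log ((s + 1) / (s - 1))) := by
  intro s hs
  have hs0 : (0:ℝ) < s := lt_trans one_pos hs
  set x : ℝ := s⁻¹ with hxdef
  have hx0 : 0 < x := inv_pos.mpr hs0
  have hx1 : x < 1 := by
    rw [hxdef, inv_lt_one_iff₀]; right; exact hs
  have hs1 : s - 1 > 0 := by linarith
  have hsp : s + 1 > 0 := by linarith
  have hlogeq : Real.log ((1+x)/(1-x)) = Real.log ((s+1)/(s-1)) := by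
    congr 1
    rw [hxdef]
    field_simp
  set L := Real.log ((s+1)/(s-1)) with hLdef
  have hL0 : 0 < L := Real.log_pos (by rw [lt_div_iff₀ hs1]; linarith)
  have hT := taylor_bound hx0 hx1
  rw [hlogeq] at hT
  set a : ℝ := s ^ ((3:ℝ)/2) with hadef
  set b : ℝ := s ^ (-(3:ℝ)/2) with hbdef
  set c : ℝ := s ^ (-(1:ℝ)/2) with hcdef
  have ha0 : 0 < a := rpow_pos_of_pos hs0 _
  have hb0 : 0 < b := rpow_pos_of_pos hs0 _
  have hc0 : 0 < c := rpow_pos_of_pos hs0 _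
  have hxr : x = s ^ (-(1:ℝ)) := by rw [hxdef, Real.rpow_neg_one]
  have hx3 : x ^ 3 = s ^ (-(3:ℝ)) := by
    rw [hxr, ← Real.rpow_natCast (s ^ (-(1:ℝ))) 3, ← Real.rpow_mul hs0.le]
    norm_num
  have hax3 : a * x ^ 3 = b := by
    rw [hadef, hx3, ← Real.rpow_add hs0, hbdef]; norm_num
  have hcb : c = b * s := by
    have h : s ^ (-(3:ℝ)/2) * s ^ (1:ℝ) = s ^ (-(1:ℝ)/2) := by
      rw [← Real.rpow_add hs0]; norm_num
    rw [hcdef, hbdef, ← h, Real.rpow_one]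
  have hca : c * s ^ 2 = a := by
    rw [hcdef, hadef, ← Real.rpow_natCast s 2, ← Real.rpow_add hs0]
    norm_num
  have hx2 : x ^ 2 = (s ^ 2)⁻¹ := by rw [hxdef, inv_pow]
  have h1x2 : 0 < 1 - x ^ 2 := by nlinarith
  have hident : Ktilde12 s = a * (L - 2*x) + b * L - 2*c/(s+1) := by
    unfold Ktilde12
    rw [← hadef, ← hbdef, ← hcdef, ← hLdef, hxdef]
    rw [← hca]
    field_simp
    ring
  rw [hident]
  have htri : |a * (L - 2*x) + b * L - 2*c/(s+1)|
      ≤ a * |L - 2*x| + b * L + 2*c/(s+1) := by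
    have h1 : |a * (L - 2*x)| = a * |L - 2*x| := by
      rw [abs_mul, abs_of_pos ha0]
    calc |a * (L - 2*x) + b * L - 2*c/(s+1)|
        ≤ |a * (L - 2*x) + b * L| + |2*c/(s+1)| := abs_sub _ _
      _ ≤ |a * (L - 2*x)| + |b * L| + |2*c/(s+1)| := by
          gcongr; exact abs_add_le _ _
      _ = a * |L - 2*x| + b * L + 2*c/(s+1) := by
          rw [h1, abs_of_pos (by positivity : (0:ℝ) < b * L), abs_of_pos (div_pos (by positivity) hsp)]
  have h2 : a * |L - 2*x| ≤ (2/3) * b * (1 - x^2)⁻¹ := by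
    calc a * |L - 2*x| ≤ a * ((2/3) * x^3 / (1 - x^2)) := by
          apply mul_le_mul_of_nonneg_left hT ha0.le
      _ = (2/3) * (a * x^3) * (1 - x^2)⁻¹ := by ring
      _ = (2/3) * b * (1 - x^2)⁻¹ := by rw [hax3]
  have h3 : 2*c/(s+1) ≤ 2*b := by
    rw [hcb, div_le_iff₀ hsp]
    nlinarith
  have hrhs : b * (2 + (2/3) * (1 - (s^2)⁻¹)⁻¹ + L)
      = 2*b + (2/3) * b * (1 - x^2)⁻¹ + b * L := by
    rw [← hx2]; ring
  rw [hrhs]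
  linarith [htri, h2, h3]
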